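/- Sufficiency of enforcing only the earliest operator in a chain: let T_{α₁,β₁}, …, T_{α_I,β_I} be CBF-STL operators (acting on the same V with V(x,0)=h(x), V(x,·) antitone on (-∞,0], V(x,s) ≥ h(x) for s ≤ 0) with strictly increasing parameters α₁ < α₂ < ⋯ < α_I and β₁ < ⋯ < β_I, α_i ≤ β_i. Then for any x and any t ∈ [0, min(α₂, β₁)], (T_{α₁,β₁} V)(x,t) ≥ 0 implies (T_{α_i,β_i} V)(x,t) ≥ 0 for every i ∈ {1,…,I}. -/

import Mathlib

/-- The CBF-STL operator `T_{α,β}`. -/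
noncomputable def cbfSTL {X : Type*} (h : X → ℝ) (V : X → ℝ → ℝ)
    (α β : ℝ) (x : X) (t : ℝ) : ℝ :=
  if t ≤ α then V x (t - α) else h x

/-- Sufficiency of enforcing only the earliest operator in a chain: for a
chain of CBF-STL operators with strictly increasing parameters, nonnegativity
of the first one on `[0, min(α₂, β₁)]` implies nonnegativity of all of them
there. -/
theorem earliest_operator_suffices {X : Type*} (h : X → ℝ) (V : X → ℝ → ℝ)
    (hV0 : ∀ y, V y 0 = h y)
    (hanti : ∀ y s₁ s₂, s₁ ≤ s₂ → s₂ ≤ 0 → V y s₂ ≤ V y s₁)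
    (hVh : ∀ y s, s ≤ 0 → h y ≤ V y s)
    (I : ℕ) (α β : Fin (I + 2) → ℝ)
    (hα0 : 0 ≤ α 0) (hαmono : StrictMono α) (hβmono : StrictMono β)
    (hαβ : ∀ i, α i ≤ β i)
    (x : X) (t : ℝ) (ht : t ∈ Set.Icc 0 (min (α 1) (β 0))) :
    0 ≤ cbfSTL h V (α 0) (β 0) x t →
    ∀ i, 0 ≤ cbfSTL h V (α i) (β i) x t := by
  intro h0 i
  obtain ⟨ht0, ht1⟩ := ht
  by_cases hi : i = 0
  · subst hi; exact h0
  · have hpos : (0 : Fin (I + 2)) < i := Fin.pos_iff_ne_zero.mpr hi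
    have h1le : (1 : Fin (I + 2)) ≤ i := by
      rw [Fin.le_def]
      rw [Fin.lt_def] at hpos
      simp only [Fin.val_zero, Fin.val_one] at hpos ⊢
      omega
    have h1i : α 1 ≤ α i := hαmono.le_iff_le.mpr h1le
    have hα0i : α 0 < α i := hαmono hpos
    have htαi : t ≤ α i := le_trans (le_trans ht1 (min_le_left _ _)) h1i
    have hneg : t - α i ≤ 0 := by linarith
    rw [cbfSTL, if_pos htαi]
    by_cases hta : t ≤ α 0
    · have h0' : 0 ≤ V x (t - α 0) := by rwa [cbfSTL, if_pos hta] at h0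
      have := hanti x (t - α i) (t - α 0) (by linarith) (by linarith)
      linarith
    · have h0' : 0 ≤ h x := by rwa [cbfSTL, if_neg hta] at h0
      have := hVh x (t - α i) hneg
      linarith
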